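/- For the bounded 1-dimensional mean estimation problem under worst-case stability, the constrained minimax risk satisfies R_{n,∞}(β) ≥ ((2r - nβ)/2)_+^2 for every β ≥ 0, where R_{n,∞}(β) is the infimum over all β-worst-case-stable estimators θ̂ of the supremum over distributions P supported on [-r,r] of E(θ̂(D_n) - E_P[X])^2. -/

import Mathlib

open MeasureTheory


lemma pi_dirac_eq {n : ℕ} (a : ℝ) :
    Measure.pi (fun _ : Fin n => Measure.dirac a) = Measure.dirac (fun _ : Fin n => a) := by
  refine Measure.pi_eq (μ := fun _ : Fin n => Measure.dirac a) fun s hs => ?_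
  classical
  by_cases h : ∀ i, a ∈ s i
  · rw [Measure.dirac_apply_of_mem (by simp [Set.mem_pi]; exact h)]
    simp [Measure.dirac_apply' _ (hs _), Set.indicator_of_mem, h]
  · push_neg at h
    obtain ⟨i, hi⟩ := h
    rw [Measure.dirac_apply' _ (MeasurableSet.univ_pi hs),
      Set.indicator_of_notMem (by simp [Set.mem_pi]; exact ⟨i, hi⟩)]
    rw [eq_comm]
    apply Finset.prod_eq_zero (Finset.mem_univ i)
    simp [Measure.dirac_apply' _ (hs i), Set.indicator_of_notMem hi]

lemma cs_helper {f : ℝ → ℝ} (hf : MemLp f 2 (volume.restrict (Set.Icc (0:ℝ) 1))) :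
    ∫ ξ in Set.Icc (0:ℝ) 1, |f ξ| ≤
      Real.sqrt (∫ ξ in Set.Icc (0:ℝ) 1, (f ξ) ^ 2) := by
  set ν := volume.restrict (Set.Icc (0:ℝ) 1)
  haveI : IsProbabilityMeasure ν := ⟨by simp [ν, Real.volume_Icc]⟩
  have h := integral_mul_le_Lp_mul_Lq_of_nonneg (μ := ν)
    (Real.HolderConjugate.two_two : Real.HolderConjugate 2 2) (f := fun ξ => |f ξ|) (g := fun _ => (1:ℝ))
    (Filter.Eventually.of_forall fun x => abs_nonneg _)
    (Filter.Eventually.of_forall fun _ => zero_le_one)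
    (by rw [ENNReal.ofReal_ofNat]; exact hf.abs) (by simpa [ENNReal.ofReal_ofNat] using memLp_const (μ := ν) (1:ℝ))
  simp only [mul_one] at h
  refine h.trans_eq ?_
  have h1 : ∫ a, |f a| ^ (2:ℝ) ∂ν = ∫ a, (f a) ^ 2 ∂ν := by
    refine integral_congr_ae (Filter.Eventually.of_forall fun x => ?_)
    have : |f x| ^ (2:ℝ) = f x ^ 2 := by
      rw [show (2:ℝ) = ((2:ℕ):ℝ) by norm_num, Real.rpow_natCast, sq_abs]
    simpa using this
  have h2 : ∫ _a, (1:ℝ) ^ (2:ℝ) ∂ν = 1 := by simp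
  rw [h1, h2, Real.one_rpow, mul_one, Real.sqrt_eq_rpow]

/-- Worst-case-stability-constrained minimax lower bound for bounded 1-d mean
estimation: every β-worst-case-stable (randomized) estimator has worst-case risk
at least `((2r - nβ)/2)₊²`. -/
theorem bounded_mean_worst_case_lower_bound (n : ℕ) (hn : 1 ≤ n) (r β : ℝ)
    (hr : 0 < r) (hβ : 0 ≤ β)
    (θhat : (Fin n → ℝ) → ℝ → ℝ)
    (hL2 : ∀ D : Fin n → ℝ, MemLp (θhat D) 2 (volume.restrict (Set.Icc (0 : ℝ) 1)))
    (hstable : ∀ D D' : Fin n → ℝ, (∀ i, D i ∈ Set.Icc (-r) r) →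
      (∀ i, D' i ∈ Set.Icc (-r) r) → hammingDist D D' ≤ 1 →
      ∫ ξ in Set.Icc (0 : ℝ) 1, |θhat D ξ - θhat D' ξ| ≤ β) :
    ∃ P : Measure ℝ, IsProbabilityMeasure P ∧ (∀ᵐ x ∂P, x ∈ Set.Icc (-r) r) ∧
      max ((2 * r - n * β) / 2) 0 ^ 2 ≤
        ∫ D, (∫ ξ in Set.Icc (0 : ℝ) 1, (θhat D ξ - ∫ x, x ∂P) ^ 2)
          ∂(Measure.pi fun _ : Fin n => P) := by

  classical
  set ν := volume.restrict (Set.Icc (0:ℝ) 1) with hν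
  haveI : IsProbabilityMeasure ν := ⟨by simp [ν, Real.volume_Icc]⟩
  -- interpolating datasets
  set Dk : ℕ → (Fin n → ℝ) := fun k i => if (i : ℕ) < k then -r else r with hDk
  have hmem : ∀ k, ∀ i, Dk k i ∈ Set.Icc (-r) r := by
    intro k i
    by_cases h : (i : ℕ) < k <;>
      simp [Dk, h, Set.mem_Icc, hr.le, neg_nonpos.mpr hr.le,
        neg_le_self hr.le, le_refl] <;> linarith
  have hham : ∀ k, hammingDist (Dk k) (Dk (k + 1)) ≤ 1 := by
    intro k
    rw [hammingDist]
    calc (Finset.univ.filter fun i : Fin n => Dk k i ≠ Dk (k+1) i).card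
        ≤ (Finset.univ.filter fun i : Fin n => (i : ℕ) = k).card := by
          apply Finset.card_le_card
          intro i hi
          simp only [Finset.mem_filter, Finset.mem_univ, true_and] at hi ⊢
          by_contra hk
          apply hi
          simp only [Dk]
          rcases lt_or_ge (i : ℕ) k with h | h
          · rw [if_pos h, if_pos (Nat.lt_succ_of_lt h)]
          · have : ¬ (i : ℕ) < k + 1 := by omega
            rw [if_neg (not_lt.mpr h), if_neg this]
      _ ≤ 1 := by
          apply Finset.card_le_one.mpr
          intro a ha b hb
          simp only [Finset.mem_filter] at ha hb
          exact Fin.ext (ha.2.trans hb.2.symm)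
  -- integrability
  have hInt : ∀ D D' : Fin n → ℝ, Integrable (fun ξ => |θhat D ξ - θhat D' ξ|) ν := by
    intro D D'
    exact (memLp_one_iff_integrable.mp
      (((hL2 D).sub (hL2 D')).mono_exponent (by norm_num))).abs
  -- chain bound
  have hchain : ∀ m, ∫ ξ in Set.Icc (0:ℝ) 1, |θhat (Dk 0) ξ - θhat (Dk m) ξ| ≤ m * β := by
    intro m
    induction m with
    | zero => simp
    | succ m ih =>
      have tri : ∀ ξ, |θhat (Dk 0) ξ - θhat (Dk (m+1)) ξ| ≤
          |θhat (Dk 0) ξ - θhat (Dk m) ξ| + |θhat (Dk m) ξ - θhat (Dk (m+1)) ξ| := by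
        intro ξ; exact abs_sub_le _ _ _
      calc ∫ ξ in Set.Icc (0:ℝ) 1, |θhat (Dk 0) ξ - θhat (Dk (m+1)) ξ|
          ≤ ∫ ξ in Set.Icc (0:ℝ) 1,
              (|θhat (Dk 0) ξ - θhat (Dk m) ξ| + |θhat (Dk m) ξ - θhat (Dk (m+1)) ξ|) := by
            exact integral_mono_of_nonneg (Filter.Eventually.of_forall fun ξ => abs_nonneg _)
              ((hInt _ _).add (hInt _ _)) (Filter.Eventually.of_forall tri)
        _ = (∫ ξ in Set.Icc (0:ℝ) 1, |θhat (Dk 0) ξ - θhat (Dk m) ξ|) +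
              ∫ ξ in Set.Icc (0:ℝ) 1, |θhat (Dk m) ξ - θhat (Dk (m+1)) ξ| :=
            integral_add (hInt _ _) (hInt _ _)
        _ ≤ m * β + β := add_le_add ih (hstable _ _ (hmem m) (hmem (m+1)) (hham m))
        _ = (m + 1 : ℕ) * β := by push_cast; ring
  have key : ∫ ξ in Set.Icc (0:ℝ) 1, |θhat (Dk 0) ξ - θhat (Dk n) ξ| ≤ n * β := hchain n
  -- the two candidate datasets
  have hD0 : Dk 0 = fun _ : Fin n => r := by funext i; simp [Dk]
  have hDn : Dk n = fun _ : Fin n => -r := by funext i; simp [Dk, i.isLt]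
  set A := Real.sqrt (∫ ξ in Set.Icc (0:ℝ) 1, (θhat (Dk 0) ξ - r) ^ 2) with hA
  set B := Real.sqrt (∫ ξ in Set.Icc (0:ℝ) 1, (θhat (Dk n) ξ - (-r)) ^ 2) with hB
  have hAB : 2 * r - n * β ≤ A + B := by
    have h1 : ∫ ξ in Set.Icc (0:ℝ) 1, |θhat (Dk 0) ξ - r| ≤ A :=
      cs_helper ((hL2 _).sub (memLp_const r))
    have h2 : ∫ ξ in Set.Icc (0:ℝ) 1, |θhat (Dk n) ξ - (-r)| ≤ B :=
      cs_helper ((hL2 _).sub (memLp_const (-r)))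
    have hIa : Integrable (fun ξ => |θhat (Dk 0) ξ - r|) ν :=
      (memLp_one_iff_integrable.mp
        (((hL2 _).sub (memLp_const r)).mono_exponent (by norm_num))).abs
    have hIb : Integrable (fun ξ => |θhat (Dk n) ξ - (-r)|) ν :=
      (memLp_one_iff_integrable.mp
        (((hL2 _).sub (memLp_const (-r))).mono_exponent (by norm_num))).abs
    have ptw : ∀ ξ, 2 * r - |θhat (Dk 0) ξ - θhat (Dk n) ξ| ≤
        |θhat (Dk 0) ξ - r| + |θhat (Dk n) ξ - (-r)| := by
      intro ξ
      have := abs_sub (θhat (Dk 0) ξ - r) (θhat (Dk n) ξ - (-r))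
      have h3 : |(θhat (Dk 0) ξ - r) - (θhat (Dk n) ξ - (-r))| ≤
          |θhat (Dk 0) ξ - r| + |θhat (Dk n) ξ - (-r)| := abs_sub _ _
      have h4 : 2 * r - |θhat (Dk 0) ξ - θhat (Dk n) ξ| ≤
          |(θhat (Dk 0) ξ - r) - (θhat (Dk n) ξ - (-r))| := by
        have := abs_sub_abs_le_abs_sub (2 * r : ℝ)
          (θhat (Dk 0) ξ - θhat (Dk n) ξ)
        have e : (2 * r : ℝ) - (θhat (Dk 0) ξ - θhat (Dk n) ξ) =
            -((θhat (Dk 0) ξ - r) - (θhat (Dk n) ξ - (-r))) := by ring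
        rw [e, abs_neg, abs_of_pos (by linarith : (0:ℝ) < 2 * r)] at this
        linarith [this]
      linarith
    have hint : ∫ ξ in Set.Icc (0:ℝ) 1, (2 * r - |θhat (Dk 0) ξ - θhat (Dk n) ξ|) ≤
        ∫ ξ in Set.Icc (0:ℝ) 1, (|θhat (Dk 0) ξ - r| + |θhat (Dk n) ξ - (-r)|) :=
      integral_mono ((integrable_const _).sub (hInt _ _)) (hIa.add hIb)
        (fun ξ => ptw ξ)
    rw [integral_sub (integrable_const _) (hInt _ _), integral_add hIa hIb] at hint
    have hconst : ∫ _ξ in Set.Icc (0:ℝ) 1, (2 * r : ℝ) = 2 * r := by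
      simp [← hν]
    rw [hconst] at hint
    linarith
  -- pick the better of the two diracs
  have hAnn : 0 ≤ A := Real.sqrt_nonneg _
  have hBnn : 0 ≤ B := Real.sqrt_nonneg _
  have hmaxAB : max ((2 * r - n * β) / 2) 0 ≤ max A B := by
    rcases le_total A B with h | h
    · rw [max_eq_right h]
      refine max_le (by linarith [hAB]) hBnn
    · rw [max_eq_left h]
      refine max_le (by linarith [hAB]) hAnn
  have hsq : max ((2 * r - n * β) / 2) 0 ^ 2 ≤ max A B ^ 2 := by
    apply pow_le_pow_left₀ (le_max_right _ _) hmaxAB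
  -- risk computation for dirac measures
  have risk : ∀ a : ℝ, ∫ D, (∫ ξ in Set.Icc (0:ℝ) 1, (θhat D ξ - ∫ x, x ∂(Measure.dirac a)) ^ 2)
      ∂(Measure.pi fun _ : Fin n => Measure.dirac a) =
      ∫ ξ in Set.Icc (0:ℝ) 1, (θhat (fun _ => a) ξ - a) ^ 2 := by
    intro a
    rw [pi_dirac_eq, integral_dirac, integral_dirac (fun x : ℝ => x) a]
  have sqA : A ^ 2 = ∫ ξ in Set.Icc (0:ℝ) 1, (θhat (Dk 0) ξ - r) ^ 2 :=
    Real.sq_sqrt (integral_nonneg fun ξ => sq_nonneg _)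
  have sqB : B ^ 2 = ∫ ξ in Set.Icc (0:ℝ) 1, (θhat (Dk n) ξ - (-r)) ^ 2 :=
    Real.sq_sqrt (integral_nonneg fun ξ => sq_nonneg _)
  rcases le_total B A with h | h
  · refine ⟨Measure.dirac r, Measure.dirac.isProbabilityMeasure,
      (MeasureTheory.ae_dirac_iff measurableSet_Icc).mpr
        ⟨by linarith, le_refl r⟩, ?_⟩
    rw [risk r]
    calc max ((2 * r - n * β) / 2) 0 ^ 2 ≤ max A B ^ 2 := hsq
      _ = A ^ 2 := by rw [max_eq_left h]
      _ = _ := by rw [sqA, hD0]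
  · refine ⟨Measure.dirac (-r), Measure.dirac.isProbabilityMeasure,
      (MeasureTheory.ae_dirac_iff measurableSet_Icc).mpr
        ⟨le_refl (-r), by linarith⟩, ?_⟩
    rw [risk (-r)]
    calc max ((2 * r - n * β) / 2) 0 ^ 2 ≤ max A B ^ 2 := hsq
      _ = B ^ 2 := by rw [max_eq_right h]
      _ = _ := by rw [sqB, hDn]
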